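/- Let T > 0, ξ ∈ ℝ, ᾱ ∈ ℝ, and let f be C¹ strictly convex superlinear with f' a bijection. Suppose s : [t₀, T] → ℝ is Lipschitz, satisfies (f')⁻¹((s(t) − ξ)/t) ≤ ᾱ for all t, and solves s'(t) = (f(ᾱ) − f(v(t)))/(ᾱ − v(t)) a.e., where v(t) = (f')⁻¹((s(t) − ξ)/t) (with the convention that the quotient equals f'(ᾱ) when v(t) = ᾱ). Then s is convex on [t₀, T]. -/

import Mathlib

open Filter MeasureTheory

open MeasureTheory Set Filter Topology intervalIntegral


/-- Variant of `sub_le_integral_of_hasDeriv_right_of_le_Ico` where the derivative hypothesis is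
replaced by an upper Dini-derivative bound. -/
theorem my_sub_le_integral {g g' φ : ℝ → ℝ} {a b : ℝ} (hab : a ≤ b)
    (hcont : ContinuousOn g (Icc a b))
    (hDini : ∀ x ∈ Ico a b, ∀ y : ℝ, g' x < y → ∀ᶠ u in 𝓝[>] x, g u - g x ≤ (u - x) * y)
    (φint : IntegrableOn φ (Icc a b)) (hφg : ∀ x ∈ Ico a b, g' x ≤ φ x) :
    g b - g a ≤ ∫ y in a..b, φ y := by
  refine le_of_forall_pos_le_add fun ε εpos => ?_
  rcases exists_lt_lowerSemicontinuous_integral_lt φ φint εpos with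
    ⟨G', f_lt_G', G'cont, G'int, G'lt_top, hG'⟩
  set s := {t | g t - g a ≤ ∫ u in a..t, (G' u).toReal} ∩ Icc a b
  have s_closed : IsClosed s := by
    have : ContinuousOn (fun t => (g t - g a, ∫ u in a..t, (G' u).toReal)) (Icc a b) := by
      rw [← uIcc_of_le hab] at G'int hcont ⊢
      exact (hcont.sub continuousOn_const).prodMk (continuousOn_primitive_interval G'int)
    simp only [s, inter_comm]
    exact this.preimage_isClosed_of_isClosed isClosed_Icc OrderClosedTopology.isClosed_le'
  have main : Icc a b ⊆ {t | g t - g a ≤ ∫ u in a..t, (G' u).toReal} := by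
    refine s_closed.Icc_subset_of_forall_exists_gt
      (by simp only [integral_same, mem_setOf_eq, sub_self, le_rfl]) fun t ht v t_lt_v => ?_
    obtain ⟨y, g'_lt_y', y_lt_G'⟩ : ∃ y : ℝ, (g' t : EReal) < y ∧ (y : EReal) < G' t :=
      EReal.lt_iff_exists_real_btwn.1 ((EReal.coe_le_coe_iff.2 (hφg t ht.2)).trans_lt (f_lt_G' t))
    have I1 : ∀ᶠ u in 𝓝[>] t, (u - t) * y ≤ ∫ w in t..u, (G' w).toReal := by
      have B : ∀ᶠ u in 𝓝 t, (y : EReal) < G' u := G'cont.lowerSemicontinuousAt _ _ y_lt_G'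
      rcases mem_nhds_iff_exists_Ioo_subset.1 B with ⟨m, M, ⟨hm, hM⟩, H⟩
      have : Ioo t (min M b) ∈ 𝓝[>] t := Ioo_mem_nhdsGT (lt_min hM ht.right.right)
      filter_upwards [this] with u hu
      have I : Icc t u ⊆ Icc a b := Icc_subset_Icc ht.2.1 (hu.2.le.trans (min_le_right _ _))
      calc
        (u - t) * y = ∫ _ in Icc t u, y := by
          simp only [hu.left.le, MeasureTheory.integral_const, smul_eq_mul, Measure.real, sub_nonneg,
            MeasurableSet.univ, Real.volume_Icc, Measure.restrict_apply, univ_inter,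
            ENNReal.toReal_ofReal]
        _ ≤ ∫ w in t..u, (G' w).toReal := by
          rw [intervalIntegral.integral_of_le hu.1.le, ← integral_Icc_eq_integral_Ioc]
          apply setIntegral_mono_ae_restrict
          · exact integrableOn_const (by simp [Real.volume_Icc])
          · exact IntegrableOn.mono_set G'int I
          · have C1 : ∀ᵐ x : ℝ ∂volume.restrict (Icc t u), G' x < ⊤ :=
              ae_mono (Measure.restrict_mono I le_rfl) G'lt_top
            have C2 : ∀ᵐ x : ℝ ∂volume.restrict (Icc t u), x ∈ Icc t u :=
              ae_restrict_mem measurableSet_Icc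
            filter_upwards [C1, C2] with x G'x hx
            apply EReal.coe_le_coe_iff.1
            have : x ∈ Ioo m M := by
              simp only [hm.trans_le hx.left,
                (hx.right.trans_lt hu.right).trans_le (min_le_left M b), mem_Ioo, and_self_iff]
            refine (H this).out.le.trans_eq ?_
            exact (EReal.coe_toReal G'x.ne (f_lt_G' x).ne_bot).symm
    have I2 : ∀ᶠ u in 𝓝[>] t, g u - g t ≤ (u - t) * y := by
      have g'_lt_y : g' t < y := EReal.coe_lt_coe_iff.1 g'_lt_y'
      exact hDini t ht.2 y g'_lt_y
    have I3 : ∀ᶠ u in 𝓝[>] t, g u - g t ≤ ∫ w in t..u, (G' w).toReal := by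
      filter_upwards [I1, I2] with u hu1 hu2 using hu2.trans hu1
    have I4 : ∀ᶠ u in 𝓝[>] t, u ∈ Ioc t (min v b) := by
      refine mem_nhdsGT_iff_exists_Ioc_subset.2 ⟨min v b, ?_, Subset.rfl⟩
      simp only [lt_min_iff, mem_Ioi]
      exact ⟨t_lt_v, ht.2.2⟩
    rcases (I3.and I4).exists with ⟨x, hx, h'x⟩
    refine ⟨x, ?_, Ioc_subset_Ioc le_rfl (min_le_left _ _) h'x⟩
    calc
      g x - g a = g t - g a + (g x - g t) := by abel
      _ ≤ (∫ w in a..t, (G' w).toReal) + ∫ w in t..x, (G' w).toReal := add_le_add ht.1 hx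
      _ = ∫ w in a..x, (G' w).toReal := by
        apply integral_add_adjacent_intervals
        · rw [intervalIntegrable_iff_integrableOn_Ioc_of_le ht.2.1]
          exact IntegrableOn.mono_set G'int
            (Ioc_subset_Icc_self.trans (Icc_subset_Icc le_rfl ht.2.2.le))
        · rw [intervalIntegrable_iff_integrableOn_Ioc_of_le h'x.1.le]
          apply IntegrableOn.mono_set G'int
          exact Ioc_subset_Icc_self.trans (Icc_subset_Icc ht.2.1 (h'x.2.trans (min_le_right _ _)))
  calc
    g b - g a ≤ ∫ y in a..b, (G' y).toReal := main (right_mem_Icc.2 hab)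
    _ ≤ (∫ y in a..b, φ y) + ε := by
      rw [intervalIntegral.integral_of_le hab, intervalIntegral.integral_of_le hab,
        ← integral_Icc_eq_integral_Ioc, ← integral_Icc_eq_integral_Ioc]
      exact hG'.le
theorem my_ftc_le {g G : ℝ → ℝ} {a b : ℝ} (hab : a ≤ b) {K : NNReal}
    (hg : LipschitzOnWith K g (Icc a b)) (hGcont : ContinuousOn G (Icc a b))
    (hae : ∀ᵐ t ∂(volume.restrict (Ioo a b)), HasDerivAt g (G t) t) :
    g b - g a ≤ ∫ y in a..b, G y := by
  classical
  rcases eq_or_lt_of_le hab with rfl | hab'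
  · simp
  set E : Set ℝ := {t | HasDerivAt g (G t) t} with hE
  have h1 : volume (Eᶜ ∩ Ioo a b) = 0 := by
    have h := hae
    rw [ae_iff] at h
    rwa [Measure.restrict_apply' measurableSet_Ioo] at h
  set B : Set ℝ := Ico a b \ (E ∩ Ioo a b) with hB
  have hBnull : volume B = 0 := by
    refine measure_mono_null (fun t ht => ?_) (measure_union_null h1 (measure_singleton a))
    rcases ht with ⟨ht1, ht2⟩
    rcases eq_or_lt_of_le ht1.1 with rfl | hat
    · exact Or.inr rfl
    · exact Or.inl ⟨fun hmem => ht2 ⟨hmem, hat, ht1.2⟩, hat, ht1.2⟩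
  -- bound for G
  obtain ⟨M, hM⟩ : ∃ M, ∀ x ∈ Icc a b, |G x| ≤ M := by
    obtain ⟨M, hM⟩ := isCompact_Icc.exists_bound_of_continuousOn hGcont
    exact ⟨M, fun x hx => by simpa using hM x hx⟩
  have hM0 : 0 ≤ M := le_trans (abs_nonneg _) (hM a ⟨le_rfl, hab⟩)
  have hGint : IntegrableOn G (Icc a b) := hGcont.integrableOn_Icc
  refine le_of_forall_pos_le_add fun δ δpos => ?_
  set ε : ℝ := δ / (K + M + 1) with hε
  have hεpos : 0 < ε := div_pos δpos (by positivity)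
  obtain ⟨U, hUB, hUopen, hUvol⟩ :=
    Set.exists_isOpen_lt_of_lt B (ENNReal.ofReal ε)
      (by rw [hBnull]; exact ENNReal.ofReal_pos.2 hεpos)
  set g' : ℝ → ℝ := fun x => if x ∈ E ∩ Ioo a b then G x else (K : ℝ) with hg'
  set φ : ℝ → ℝ := fun x => G x + (K + M) * U.indicator (fun _ => (1:ℝ)) x with hφ
  have hind : IntegrableOn (U.indicator (fun _ => (1:ℝ))) (Icc a b) := by
    refine Integrable.indicator ?_ hUopen.measurableSet
    exact integrableOn_const (by simp [Real.volume_Icc])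
  have hφint : IntegrableOn φ (Icc a b) := hGint.add (hind.const_mul _)
  have hφg : ∀ x ∈ Ico a b, g' x ≤ φ x := by
    intro x hx
    by_cases hxE : x ∈ E ∩ Ioo a b
    · simp only [hg', hφ, if_pos hxE]
      have : (0:ℝ) ≤ (K + M) * U.indicator (fun _ => (1:ℝ)) x := by
        apply mul_nonneg (by positivity)
        exact Set.indicator_nonneg (fun _ _ => zero_le_one) x
      linarith
    · have hxU : x ∈ U := hUB ⟨hx, hxE⟩
      simp only [hg', hφ, if_neg hxE, Set.indicator_of_mem hxU]
      have := (hM x (Ico_subset_Icc_self hx))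
      have : -M ≤ G x := by cases abs_le.1 this; linarith
      linarith
  have hDini : ∀ x ∈ Ico a b, ∀ y : ℝ, g' x < y →
      ∀ᶠ u in 𝓝[>] x, g u - g x ≤ (u - x) * y := by
    intro x hx y hy
    by_cases hxE : x ∈ E ∩ Ioo a b
    · replace hy : G x < y := by simp only [hg'] at hy; rwa [if_pos hxE] at hy
      have hd : HasDerivWithinAt g (G x) (Ioi x) x := hxE.1.hasDerivWithinAt
      filter_upwards [hd.limsup_slope_le' (notMem_Ioi.2 le_rfl) hy, self_mem_nhdsWithin]
        with u hu hu'
      have hux : 0 < u - x := sub_pos.2 hu'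
      rw [slope_def_field] at hu
      have : (g u - g x) / (u - x) ≤ y := hu.le
      calc g u - g x = (u - x) * ((g u - g x) / (u - x)) := by field_simp
        _ ≤ (u - x) * y := by apply mul_le_mul_of_nonneg_left this hux.le
    · replace hy : (K:ℝ) < y := by simp only [hg'] at hy; rwa [if_neg hxE] at hy
      have hxb : x < b := hx.2
      filter_upwards [Ioc_mem_nhdsGT_of_mem ⟨le_rfl, hxb⟩] with u hu
      have hux : 0 < u - x := sub_pos.2 hu.1
      have huI : u ∈ Icc a b := ⟨hx.1.trans hu.1.le, hu.2⟩
      have := hg.dist_le_mul u huI x (Ico_subset_Icc_self hx)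
      rw [Real.dist_eq, Real.dist_eq] at this
      have h2 : g u - g x ≤ (K : ℝ) * (u - x) := by
        have := le_trans (le_abs_self _) this
        rwa [abs_of_pos hux] at this
      calc g u - g x ≤ (K:ℝ) * (u - x) := h2
        _ ≤ (u - x) * y := by rw [mul_comm]; exact mul_le_mul_of_nonneg_left hy.le hux.le
  have key := my_sub_le_integral hab hg.continuousOn hDini hφint hφg
  have hsplit : (∫ y in a..b, φ y) ≤ (∫ y in a..b, G y) + (K + M) * ε := by
    have hi1 : IntervalIntegrable G volume a b :=
      (intervalIntegrable_iff_integrableOn_Icc_of_le hab).2 hGint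
    have hi2 : IntervalIntegrable (fun x => ((K:ℝ) + M) * U.indicator (fun _ => (1:ℝ)) x) volume a b :=
      (intervalIntegrable_iff_integrableOn_Icc_of_le hab).2 (hind.const_mul _)
    rw [hφ]
    rw [intervalIntegral.integral_add hi1 hi2]
    have : (∫ y in a..b, (K + M) * U.indicator (fun _ => (1:ℝ)) y) ≤ (K + M) * ε := by
      rw [intervalIntegral.integral_const_mul]
      apply mul_le_mul_of_nonneg_left _ (by positivity : (0:ℝ) ≤ (K:ℝ) + M)
      rw [intervalIntegral.integral_of_le hab, MeasureTheory.integral_indicator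
        hUopen.measurableSet]
      simp only [MeasureTheory.setIntegral_const, smul_eq_mul, mul_one, Measure.real]
      rw [Measure.restrict_apply' measurableSet_Ioc]
      calc (volume (U ∩ Ioc a b)).toReal ≤ (volume U).toReal :=
            ENNReal.toReal_mono hUvol.ne_top (measure_mono inter_subset_left)
        _ ≤ ε := (ENNReal.toReal_lt_of_lt_ofReal hUvol).le
    linarith
  have hfin : ((K:ℝ) + M) * ε ≤ δ := by
    have h4 : ((K:ℝ) + M) * ε ≤ ((K:ℝ) + M + 1) * ε := by nlinarith [hεpos.le]
    have h5 : ((K:ℝ) + M + 1) * ε = δ := by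
      rw [hε]; field_simp
    linarith
  linarith
section gzero
variable {f : ℝ → ℝ} (hf : ContDiff ℝ 1 f) (hfc : StrictConvexOn ℝ Set.univ f) (alpha : ℝ)

private noncomputable def gz (f : ℝ → ℝ) (alpha : ℝ) : ℝ → ℝ :=
  fun u => if u = alpha then deriv f alpha else (f alpha - f u) / (alpha - u)

lemma gz_eq_slope {u : ℝ} (hu : u ≠ alpha) : gz f alpha u = slope f alpha u := by
  rw [gz, if_neg hu, slope_def_field, ← neg_sub (f u), ← neg_sub u, neg_div_neg_eq]

include hf in
lemma gz_continuousOn : ContinuousOn (gz f alpha) (Set.Iic alpha) := by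
  have hd : Differentiable ℝ f := hf.differentiable one_ne_zero
  intro u hu
  rcases eq_or_lt_of_le (Set.mem_Iic.1 hu) with huα | hu'
  · subst huα
    rw [ContinuousWithinAt]
    have h0 : gz f u u = deriv f u := if_pos rfl
    rw [h0]
    have hins : Set.Iic u = insert u (Set.Iio u) := by
      ext x; simp [le_iff_lt_or_eq, or_comm]
    rw [hins, nhdsWithin_insert, tendsto_sup]
    refine ⟨by rw [← h0]; exact tendsto_pure_nhds _ _, ?_⟩
    have hslope : Tendsto (slope f u) (𝓝[≠] u) (𝓝 (deriv f u)) :=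
      hasDerivAt_iff_tendsto_slope.1 (hd u).hasDerivAt
    have hmono : 𝓝[Set.Iio u] u ≤ 𝓝[≠] u :=
      nhdsWithin_mono _ (fun x hx => ne_of_lt hx)
    refine (hslope.mono_left hmono).congr' ?_
    filter_upwards [self_mem_nhdsWithin] with x hx
    exact (gz_eq_slope u (ne_of_lt hx)).symm
  · have hev : ∀ᶠ x in 𝓝 u, gz f alpha x = (f alpha - f x) / (alpha - x) := by
      filter_upwards [Iio_mem_nhds hu'] with x hx
      exact if_neg (ne_of_lt hx)
    have hca : ContinuousAt (fun x => (f alpha - f x) / (alpha - x)) u := by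
      apply ContinuousAt.div
      · exact (continuousAt_const.sub hd.continuous.continuousAt)
      · exact (continuousAt_const.sub continuousAt_id)
      · exact sub_ne_zero.2 (ne_of_gt hu')
    exact ((continuousAt_congr hev).2 hca).continuousWithinAt

include hf hfc in
lemma gz_monotoneOn : MonotoneOn (gz f alpha) (Set.Iic alpha) := by
  have hd : Differentiable ℝ f := hf.differentiable one_ne_zero
  intro u hu u' hu' huu'
  rcases eq_or_lt_of_le huu' with rfl | hlt
  · exact le_refl _
  rcases eq_or_lt_of_le (Set.mem_Iic.1 hu') with h2 | hu'2
  · subst h2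
    rw [gz_eq_slope _ (ne_of_lt hlt), gz, if_pos rfl, slope_comm]
    exact hfc.convexOn.slope_le_deriv (Set.mem_univ u) (Set.mem_univ u') hlt (hd u')
  · rw [gz_eq_slope _ (ne_of_lt (hlt.trans hu'2)), gz_eq_slope _ (ne_of_lt hu'2)]
    exact hfc.convexOn.slope_mono (Set.mem_univ alpha)
      ⟨Set.mem_univ u, (ne_of_lt (hlt.trans hu'2))⟩
      ⟨Set.mem_univ u', (ne_of_lt hu'2)⟩ huu'

include hf hfc in
lemma deriv_le_gz {u : ℝ} (hu : u ≤ alpha) : deriv f u ≤ gz f alpha u := by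
  have hd : Differentiable ℝ f := hf.differentiable one_ne_zero
  rcases eq_or_lt_of_le hu with rfl | hu'
  · rw [gz, if_pos rfl]
  · rw [gz_eq_slope _ (ne_of_lt hu'), slope_comm]
    exact hfc.convexOn.deriv_le_slope (Set.mem_univ u) (Set.mem_univ alpha) hu' (hd u)

end gzero

lemma finv_strictMono {f finv : ℝ → ℝ} (hmono : Monotone (deriv f))
    (hfinv : ∀ p, deriv f (finv p) = p) : StrictMono finv := by
  intro p q hpq
  by_contra h
  push_neg at h
  have := hmono h
  rw [hfinv, hfinv] at this
  exact absurd (this.trans_lt hpq) (lt_irrefl _)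

lemma finv_continuous {f finv : ℝ → ℝ} (hmono : Monotone (deriv f))
    (hfinv : ∀ p, deriv f (finv p) = p) (hfinv2 : ∀ x, finv (deriv f x) = x) :
    Continuous finv :=
  ((finv_strictMono hmono hfinv).orderIsoOfSurjective finv
    (fun x => ⟨deriv f x, hfinv2 x⟩)).continuous

/-- Lipschitz bound for `t ↦ (s t - ξ)/t` on `[a, b]` with `0 < a`. -/
lemma lipschitz_w {s : ℝ → ℝ} {K : NNReal} {a b ξ C : ℝ} (ha : 0 < a) (hab : a ≤ b)
    (hs : ∀ x ∈ Icc a b, ∀ y ∈ Icc a b, |s x - s y| ≤ (K : ℝ) * |x - y|)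
    (hC : ∀ x ∈ Icc a b, |s x - ξ| ≤ C) :
    LipschitzOnWith (((K : ℝ) * b + C) / (a * a)).toNNReal
      (fun t => (s t - ξ) / t) (Icc a b) := by
  have hb0 : 0 < b := ha.trans_le hab
  have hC0 : 0 ≤ C := le_trans (abs_nonneg _) (hC a ⟨le_rfl, hab⟩)
  have hnum0 : 0 ≤ (K:ℝ) * b + C := add_nonneg (mul_nonneg K.2 hb0.le) hC0
  rw [lipschitzOnWith_iff_dist_le_mul]
  intro x hx y hy
  rw [Real.dist_eq, Real.dist_eq, Real.coe_toNNReal _ (div_nonneg hnum0 (by positivity))]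
  have hx0 : 0 < x := ha.trans_le hx.1
  have hy0 : 0 < y := ha.trans_le hy.1
  have key : (s x - ξ) / x - (s y - ξ) / y
      = ((s x - s y) * y + (s y - ξ) * (y - x)) / (x * y) := by
    field_simp
    ring
  rw [key, abs_div, abs_of_pos (mul_pos hx0 hy0)]
  have h1 : |(s x - s y) * y + (s y - ξ) * (y - x)| ≤ ((K:ℝ) * b + C) * |x - y| := by
    calc |(s x - s y) * y + (s y - ξ) * (y - x)|
        ≤ |(s x - s y) * y| + |(s y - ξ) * (y - x)| := abs_add_le _ _
      _ = |s x - s y| * |y| + |s y - ξ| * |y - x| := by rw [abs_mul, abs_mul]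
      _ ≤ ((K:ℝ) * |x - y|) * b + C * |x - y| := by
          apply add_le_add
          · apply mul_le_mul (hs x hx y hy) _ (abs_nonneg _) (by positivity)
            rw [abs_of_pos hy0]; exact hy.2
          · rw [abs_sub_comm y x]
            exact mul_le_mul_of_nonneg_right (hC y hy) (abs_nonneg _)
      _ = ((K:ℝ) * b + C) * |x - y| := by ring
  have h2 : a * a ≤ x * y := mul_le_mul hx.1 hy.1 ha.le hx0.le
  calc |(s x - s y) * y + (s y - ξ) * (y - x)| / (x * y)
      ≤ (((K:ℝ) * b + C) * |x - y|) / (a * a) :=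
        div_le_div₀ (by positivity) h1 (by positivity) h2
      _ = (((K:ℝ) * b + C) / (a * a)) * |x - y| := by ring

private lemma aux_div (G S t : ℝ) (ht0 : t ≠ 0) : (G * t - S) / t ^ 2 = (G - S / t) / t := by
  rw [sub_div, sub_div, div_div, pow_two, ← div_div, mul_div_assoc, div_self ht0, mul_one]

theorem my_ftc_eq {g G : ℝ → ℝ} {a b : ℝ} (hab : a ≤ b) {K : NNReal}
    (hg : LipschitzOnWith K g (Icc a b)) (hGcont : ContinuousOn G (Icc a b))
    (hae : ∀ᵐ t ∂(volume.restrict (Ioo a b)), HasDerivAt g (G t) t) :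
    g b - g a = ∫ y in a..b, G y := by
  refine le_antisymm (my_ftc_le hab hg hGcont hae) ?_
  have h2 := my_ftc_le hab hg.neg hGcont.neg (hae.mono fun t ht => ht.neg)
  simp only [intervalIntegral.integral_neg, Pi.neg_apply, neg_sub] at h2
  linarith [h2]


/-- a Lipschitz solution of
`s'(t) = (f(ᾱ) − f(v(t)))/(ᾱ − v(t))` with `v(t) = (f')⁻¹((s(t) − ξ)/t) ≤ ᾱ`
is convex. -/
theorem stmt16 (f : ℝ → ℝ) (hf : ContDiff ℝ 1 f)
    (hfc : StrictConvexOn ℝ Set.univ f)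
    (hsuper : Tendsto (fun p => f p / |p|) (cocompact ℝ) atTop)
    (finv : ℝ → ℝ) (hfinv : ∀ p, deriv f (finv p) = p)
    (hfinv2 : ∀ x, finv (deriv f x) = x)
    (T t₀ ξ alpha : ℝ) (ht₀ : 0 ≤ t₀) (hT : t₀ < T)
    (s : ℝ → ℝ) (K : NNReal) (hs : LipschitzOnWith K s (Set.Icc t₀ T))
    (hv : ∀ t ∈ Set.Icc t₀ T, finv ((s t - ξ) / t) ≤ alpha)
    (hode : ∀ᵐ t ∂(volume.restrict (Set.Ioo t₀ T)),
      HasDerivAt s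
        (if finv ((s t - ξ) / t) = alpha then deriv f alpha
         else (f alpha - f (finv ((s t - ξ) / t))) /
              (alpha - finv ((s t - ξ) / t))) t) :
    ConvexOn ℝ (Set.Icc t₀ T) s := by
  classical
  have hd : Differentiable ℝ f := hf.differentiable one_ne_zero
  have hmono : Monotone (deriv f) := by
    have := hfc.convexOn.monotoneOn_deriv (fun x _ => hd x)
    rwa [monotoneOn_univ] at this
  have hfinvm : StrictMono finv := finv_strictMono hmono hfinv
  have hfinvc : Continuous finv := finv_continuous hmono hfinv hfinv2
  have hscont : ContinuousOn s (Icc t₀ T) := hs.continuousOn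
  set w : ℝ → ℝ := fun t => (s t - ξ) / t with hw_def
  set v : ℝ → ℝ := fun t => finv (w t) with hv_def
  set G : ℝ → ℝ := fun t => gz f alpha (v t) with hG_def
  -- hode in terms of G
  have hodeG : ∀ᵐ t ∂(volume.restrict (Set.Ioo t₀ T)), HasDerivAt s (G t) t := by
    exact hode.mono fun t ht => ht
  -- continuity of w, v, G away from 0
  have hwcont : ∀ a, t₀ < a → ContinuousOn w (Icc a T) := by
    intro a ha
    refine ContinuousOn.div ((hscont.mono (Icc_subset_Icc ha.le le_rfl)).sub continuousOn_const)
      continuousOn_id ?_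
    intro t htm
    exact ne_of_gt (lt_of_le_of_lt ht₀ (ha.trans_le htm.1))
  have hvle : ∀ t ∈ Icc t₀ T, v t ≤ alpha := hv
  have hGcont : ∀ a, t₀ < a → ContinuousOn G (Icc a T) := by
    intro a ha
    refine (gz_continuousOn hf alpha).comp (hfinvc.comp_continuousOn (hwcont a ha)) ?_
    intro t htm
    exact mem_Iic.2 (hvle t (Icc_subset_Icc ha.le le_rfl htm))
  have hGgz : ∀ t, G t = gz f alpha (v t) := fun t => rfl
  -- restricted ae
  have hode' : ∀ a b, t₀ ≤ a → b ≤ T →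
      ∀ᵐ t ∂(volume.restrict (Set.Ioo a b)), HasDerivAt s (G t) t :=
    fun a b ha hb => ae_mono (Measure.restrict_mono (Ioo_subset_Ioo ha hb) le_rfl) hodeG
  -- FTC for s
  have hsftc : ∀ a b, t₀ < a → a ≤ b → b ≤ T → s b - s a = ∫ y in a..b, G y := by
    intro a b ha hab hb
    exact my_ftc_eq hab (hs.mono (Icc_subset_Icc ha.le hb))
      ((hGcont a ha).mono (Icc_subset_Icc le_rfl hb)) (hode' a b ha.le hb)
  -- w = deriv f ∘ v , and G ≥ w
  have hwv : ∀ t, deriv f (v t) = w t := fun t => hfinv (w t)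
  have hGw : ∀ t ∈ Icc t₀ T, w t ≤ G t := by
    intro t htm
    rw [hGgz, ← hwv t]
    exact deriv_le_gz hf hfc alpha (hvle t htm)
  -- monotonicity of w on Ioc t₀ T
  have hwmono : ∀ a b, a ∈ Ioc t₀ T → b ∈ Ioc t₀ T → a ≤ b → w a ≤ w b := by
    intro a b ha hb hab
    have ha0 : 0 < a := lt_of_le_of_lt ht₀ ha.1
    set W : ℝ → ℝ := fun t => (G t - w t) / t with hW_def
    have hWcont : ContinuousOn W (Icc a b) := by
      refine ContinuousOn.div
        (((hGcont a ha.1).mono (Icc_subset_Icc le_rfl hb.2)).sub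
          ((hwcont a ha.1).mono (Icc_subset_Icc le_rfl hb.2))) continuousOn_id ?_
      intro t htm
      exact ne_of_gt (ha0.trans_le htm.1)
    -- Lipschitz for w on Icc a b
    have hsK : ∀ x ∈ Icc a b, ∀ y ∈ Icc a b, |s x - s y| ≤ (K : ℝ) * |x - y| := by
      intro x hx y hy
      have h1 := hs.dist_le_mul x
        (Icc_subset_Icc ha.1.le hb.2 hx) y (Icc_subset_Icc ha.1.le hb.2 hy)
      rwa [Real.dist_eq, Real.dist_eq] at h1
    have hsC : ∀ x ∈ Icc a b, |s x - ξ| ≤ (K : ℝ) * (b - a) + |s a - ξ| := by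
      intro x hx
      calc |s x - ξ| = |(s x - s a) + (s a - ξ)| := by rw [sub_add_sub_cancel]
        _ ≤ |s x - s a| + |s a - ξ| := abs_add_le _ _
        _ ≤ (K : ℝ) * |x - a| + |s a - ξ| := by
            have := hsK x hx a ⟨le_rfl, hab⟩
            linarith
        _ ≤ (K : ℝ) * (b - a) + |s a - ξ| := by
            have h2 : |x - a| ≤ b - a := by
              rw [abs_of_nonneg (by linarith [hx.1])]
              linarith [hx.2]
            have h3 : (K : ℝ) * |x - a| ≤ (K : ℝ) * (b - a) :=
              mul_le_mul_of_nonneg_left h2 K.coe_nonneg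
            linarith
    have hwlip := lipschitz_w ha0 hab hsK hsC
    have hWae : ∀ᵐ t ∂(volume.restrict (Set.Ioo a b)), HasDerivAt w (W t) t := by
      filter_upwards [hode' a b ha.1.le hb.2, ae_restrict_mem measurableSet_Ioo] with t hst htm
      have ht0 : t ≠ 0 := ne_of_gt (ha0.trans htm.1)
      have h1 : HasDerivAt (fun u => s u - ξ) (G t) t := hst.sub_const ξ
      have h2 : HasDerivAt w ((G t * t - (s t - ξ) * 1) / t ^ 2) t :=
        h1.div (hasDerivAt_id t) ht0
      have h3 : (G t * t - (s t - ξ) * 1) / t ^ 2 = W t := by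
        show _ = (G t - (s t - ξ) / t) / t
        rw [mul_one]
        exact aux_div (G t) (s t - ξ) t ht0
      rwa [h3] at h2
    have hkey := my_ftc_eq hab hwlip hWcont hWae
    have hpos : 0 ≤ ∫ y in a..b, W y := by
      apply intervalIntegral.integral_nonneg hab
      intro u hu
      have hu0 : 0 < u := ha0.trans_le hu.1
      have huT : u ∈ Icc t₀ T := ⟨ha.1.le.trans hu.1, hu.2.trans hb.2⟩
      have h4 := hGw u huT
      show 0 ≤ (G u - w u) / u
      exact div_nonneg (by linarith) hu0.le
    linarith
  -- monotonicity of G on Ioc t₀ T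
  have hGmono : ∀ a b, a ∈ Ioc t₀ T → b ∈ Ioc t₀ T → a ≤ b → G a ≤ G b := by
    intro a b ha hb hab
    rw [hGgz, hGgz]
    refine gz_monotoneOn hf hfc alpha
      (mem_Iic.2 (hvle a ⟨ha.1.le, ha.2⟩)) (mem_Iic.2 (hvle b ⟨hb.1.le, hb.2⟩)) ?_
    exact hfinvm.monotone (hwmono a b ha hb hab)
  -- slope inequality on Ioc t₀ T
  have hslope : ∀ x z, x ∈ Ioc t₀ T → z ∈ Ioc t₀ T → ∀ y, x < y → y < z →
      (s y - s x) / (y - x) ≤ (s z - s y) / (z - y) := by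
    intro x z hx hz y hxy hyz
    have hy : y ∈ Ioc t₀ T := ⟨hx.1.trans hxy, hyz.le.trans hz.2⟩
    have e1 := hsftc x y hx.1 hxy.le hy.2
    have e2 := hsftc y z hy.1 hyz.le hz.2
    have hi1 : IntervalIntegrable G volume x y := by
      apply ContinuousOn.intervalIntegrable
      rw [uIcc_of_le hxy.le]
      exact (hGcont x hx.1).mono (Icc_subset_Icc le_rfl hy.2)
    have hi2 : IntervalIntegrable G volume y z := by
      apply ContinuousOn.intervalIntegrable
      rw [uIcc_of_le hyz.le]
      exact (hGcont y hy.1).mono (Icc_subset_Icc le_rfl hz.2)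
    have hu1 : s y - s x ≤ (y - x) * G y := by
      rw [e1]
      calc (∫ u in x..y, G u) ≤ ∫ _ in x..y, G y := by
            apply intervalIntegral.integral_mono_on hxy.le hi1 intervalIntegrable_const
            intro u hu
            exact hGmono u y ⟨hx.1.trans_le hu.1, hu.2.trans hy.2⟩ hy hu.2
        _ = (y - x) * G y := by simp [smul_eq_mul]
    have hu2 : (z - y) * G y ≤ s z - s y := by
      rw [e2]
      calc (z - y) * G y = ∫ _ in y..z, G y := by simp [smul_eq_mul]
        _ ≤ ∫ u in y..z, G u := by
            apply intervalIntegral.integral_mono_on hyz.le intervalIntegrable_const hi2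
            intro u hu
            exact hGmono y u hy ⟨hy.1.trans_le hu.1, hu.2.trans hz.2⟩ hu.1
    have h1 : (s y - s x) / (y - x) ≤ G y := by
      rw [div_le_iff₀ (by linarith : (0:ℝ) < y - x)]
      linarith [hu1]
    have h2 : G y ≤ (s z - s y) / (z - y) := by
      rw [le_div_iff₀ (by linarith : (0:ℝ) < z - y)]
      linarith [hu2]
    linarith
  -- conclude
  refine convexOn_of_slope_mono_adjacent (convex_Icc t₀ T) ?_
  intro x y z hx hz hxy hyz
  have hzT : z ∈ Ioc t₀ T := ⟨hx.1.trans_lt (hxy.trans hyz), hz.2⟩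
  rcases eq_or_lt_of_le hx.1 with hxt | hxt
  · -- x = t₀ : limit argument
    have hsub : Ioo x y ⊆ Icc t₀ T := by
      intro u hu
      exact ⟨hxt ▸ hu.1.le, (hu.2.trans hyz).le.trans hz.2⟩
    have key : ∀ x' ∈ Ioo x y, (s y - s x') / (y - x') ≤ (s z - s y) / (z - y) := by
      intro x' hx'
      exact hslope x' z ⟨hxt ▸ hx'.1, ((hx'.2.trans hyz).le.trans hz.2)⟩ hzT y hx'.2 hyz
    have hne : (𝓝[Ioo x y] x).NeBot := by
      rw [← mem_closure_iff_nhdsWithin_neBot, closure_Ioo (ne_of_lt hxy)]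
      exact ⟨le_rfl, hxy.le⟩
    have hlim : Tendsto (fun x' => (s y - s x') / (y - x')) (𝓝[Ioo x y] x)
        (𝓝 ((s y - s x) / (y - x))) := by
      apply Tendsto.div
      · exact Tendsto.const_sub (s y)
          ((hscont x hx).tendsto.mono_left (nhdsWithin_mono x hsub))
      · exact (tendsto_const_nhds.sub (tendsto_nhdsWithin_of_tendsto_nhds tendsto_id))
      · exact sub_ne_zero.2 (ne_of_gt hxy)
    exact le_of_tendsto hlim (eventually_of_mem self_mem_nhdsWithin key)
  · exact hslope x z ⟨hxt, hx.2⟩ hzT y hxy hyz
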